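/- (Local PL constant bound for softmax policy gradient, λ = 0.) Consider a finite discounted MDP with optimal value V*(δ_s) for each state s, uniquely optimal actions a*(s), and optimal reward gap Δ*(s) = Q*(s, a*(s)) - max_{a ≠ a*(s)} Q*(s,a) > 0. Let α ∈ (0,1) and set r = min_s μ(s) · min_s Δ*(s) · (1-α), where μ is an initial distribution with μ(s) > 0 for all s. If a policy π satisfies V*(μ) - V^π(μ) ≤ r, then π(a*(s)|s) ≥ α for every state s. -/

import Mathlib

theorem stmt_17 {S A : Type*} [Fintype S] [Fintype A] [DecidableEq A] [Nonempty S] [Nonempty A]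
    (Q : S → A → ℝ) (Vstar Vpi : S → ℝ) (astar : S → A) (Δ : S → ℝ)
    (pol : S → A → ℝ) (μ : S → ℝ) (α : ℝ)
    (hα : 0 < α ∧ α < 1)
    (hμpos : ∀ s, 0 < μ s) (hμsum : ∑ s, μ s = 1)
    (hπpos : ∀ s a, 0 ≤ pol s a) (hπsum : ∀ s, ∑ a, pol s a = 1)
    (hΔpos : ∀ s, 0 < Δ s)
    (hgap : ∀ s a, a ≠ astar s → Q s a ≤ Q s (astar s) - Δ s)
    (hperf : ∀ s, ∑ a ∈ Finset.univ.filter (fun a => a ≠ astar s),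
      pol s a * (Q s (astar s) - Q s a) ≤ Vstar s - Vpi s)
    (hmono : ∀ s, Vpi s ≤ Vstar s)
    (hclose : (∑ s, μ s * Vstar s) - (∑ s, μ s * Vpi s) ≤
      (Finset.univ.inf' Finset.univ_nonempty μ) *
      (Finset.univ.inf' Finset.univ_nonempty Δ) * (1 - α)) :
    ∀ s, α ≤ pol s (astar s) := by
  intro s
  set mμ := Finset.univ.inf' Finset.univ_nonempty μ with hmμ
  set mΔ := Finset.univ.inf' Finset.univ_nonempty Δ with hmΔ
  have hmμ_le : mμ ≤ μ s := Finset.inf'_le _ (Finset.mem_univ s)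
  have hmΔ_le : mΔ ≤ Δ s := Finset.inf'_le _ (Finset.mem_univ s)
  obtain ⟨s0, -, hs0⟩ := Finset.exists_mem_eq_inf' (Finset.univ_nonempty (α := S)) μ
  obtain ⟨s1, -, hs1⟩ := Finset.exists_mem_eq_inf' (Finset.univ_nonempty (α := S)) Δ
  have hmμpos : 0 < mμ := by rw [hmμ, hs0]; exact hμpos s0
  have hmΔpos : 0 < mΔ := by rw [hmΔ, hs1]; exact hΔpos s1
  -- single state bound
  have hsingle : μ s * (Vstar s - Vpi s) ≤ mμ * mΔ * (1 - α) := by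
    calc μ s * (Vstar s - Vpi s)
        ≤ ∑ t, μ t * (Vstar t - Vpi t) := by
          apply Finset.single_le_sum (f := fun t => μ t * (Vstar t - Vpi t))
            (fun t _ => mul_nonneg (hμpos t).le (sub_nonneg.2 (hmono t))) (Finset.mem_univ s)
      _ = (∑ t, μ t * Vstar t) - (∑ t, μ t * Vpi t) := by
          rw [← Finset.sum_sub_distrib]; apply Finset.sum_congr rfl; intro t _; ring
      _ ≤ mμ * mΔ * (1 - α) := hclose
  -- lower bound on the gap sum
  have hlb : (1 - pol s (astar s)) * Δ s ≤ Vstar s - Vpi s := by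
    have h1 : (1 - pol s (astar s)) * Δ s
        = ∑ a ∈ Finset.univ.filter (fun a => a ≠ astar s), pol s a * Δ s := by
      rw [← Finset.sum_mul]
      congr 1
      have := hπsum s
      rw [← Finset.sum_filter_add_sum_filter_not Finset.univ (fun a => a ≠ astar s)
        (pol s)] at this
      have h2 : ∑ a ∈ Finset.univ.filter (fun a => ¬ a ≠ astar s), pol s a
          = pol s (astar s) := by
        rw [Finset.sum_filter]
        simp [Finset.sum_ite_eq' Finset.univ (astar s) (pol s)]
      linarith
    rw [h1]
    refine le_trans (Finset.sum_le_sum ?_) (hperf s)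
    intro a ha
    simp only [Finset.mem_filter] at ha
    have := hgap s a ha.2
    have := hπpos s a
    nlinarith
  have key : mμ * mΔ * (1 - pol s (astar s)) ≤ mμ * mΔ * (1 - α) := by
    calc mμ * mΔ * (1 - pol s (astar s))
        ≤ μ s * ((1 - pol s (astar s)) * Δ s) := by
          have hp : pol s (astar s) ≤ 1 := by
            have := hπsum s
            have := Finset.single_le_sum (f := pol s) (fun a _ => hπpos s a)
              (Finset.mem_univ (astar s))
            linarith
          have h3 : mμ * mΔ ≤ μ s * Δ s :=
            mul_le_mul hmμ_le hmΔ_le hmΔpos.le (hμpos s).le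
          have h4 := mul_le_mul_of_nonneg_right h3 (sub_nonneg.2 hp)
          nlinarith
      _ ≤ μ s * (Vstar s - Vpi s) := by
          exact mul_le_mul_of_nonneg_left hlb (hμpos s).le
      _ ≤ mμ * mΔ * (1 - α) := hsingle
  have := mul_pos hmμpos hmΔpos
  nlinarith
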